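/- Let C be a circle and A a circular arc (or line segment) in the plane, and let x be a point. There exists at most one circle with center x that osculates A, where a circle C with center x osculates A at a ∈ A if the open disk bounded by C is disjoint from A, a ∈ C ∩ A, and x = a + c·n_A(a) for some c ≥ 0 (n_A(a) the left unit normal of A at a). If such an osculating circle C exists, its radius equals dist(x, A), it osculates A at the point of A closest to x, and if A is a convex arc then the radius of C is at most the radius of A. -/

import Mathlib

/-- The circle with center `x` and radius `ρ` *osculates* the set `A` (an oriented arc
or segment with left unit normal field `nA`) at the point `a` if the open disk it bounds
is disjoint from `A`, `a` lies on both the circle and `A`, and the center `x` lies on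
the ray from `a` in the direction `nA a`. -/
def Osculates (A : Set ℂ) (nA : ℂ → ℂ) (x a : ℂ) (ρ : ℝ) : Prop :=
  Metric.ball x ρ ∩ A = ∅ ∧ a ∈ A ∧ dist x a = ρ ∧ ∃ c : ℝ, 0 ≤ c ∧ x = a + c • nA a

/-- Observation `oscSmallRadius`.
Let `A` be a (nonempty) circular arc or line segment with left unit normal field `nA`,
and `x` a point.  Then: there is at most one circle centered at `x` osculating `A`
(any two have equal radii, hence coincide); if an osculating circle exists, its radius
equals `dist(x, A)` and it osculates `A` at a point of `A` closest to `x`; and if `A` is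
a convex arc — an arc of a circle of radius `rA` centered at `o` whose left normal
`nA a = (o − a)/rA` points toward the center — then the radius of the osculating circle
is at most `rA`. -/
theorem stmt12 (A : Set ℂ) (hA : A.Nonempty) (nA : ℂ → ℂ) (x : ℂ) :
    (∀ (a a' : ℂ) (ρ ρ' : ℝ),
        Osculates A nA x a ρ → Osculates A nA x a' ρ' → ρ = ρ') ∧
    (∀ (a : ℂ) (ρ : ℝ), Osculates A nA x a ρ →
        ρ = Metric.infDist x A ∧ ∀ b ∈ A, dist x a ≤ dist x b) ∧
    (∀ (o : ℂ) (rA θ₁ θ₂ : ℝ), 0 < rA → θ₁ < θ₂ →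
        A = (fun θ : ℝ => o + (rA : ℂ) * Complex.exp (θ * Complex.I)) '' Set.Icc θ₁ θ₂ →
        (∀ a ∈ A, nA a = rA⁻¹ • (o - a)) →
        ∀ (a : ℂ) (ρ : ℝ), Osculates A nA x a ρ → ρ ≤ rA) := by
  -- From the empty intersection, all points of `A` are at distance ≥ ρ from `x`.
  have hle : ∀ (a : ℂ) (ρ : ℝ), Osculates A nA x a ρ → ∀ b ∈ A, ρ ≤ dist x b := by
    rintro a ρ ⟨hball, -, -, -⟩ b hb
    by_contra h
    push_neg at h
    have hmem : b ∈ Metric.ball x ρ ∩ A := ⟨by rwa [Metric.mem_ball, dist_comm], hb⟩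
    rw [hball] at hmem
    exact hmem
  have key : ∀ (a : ℂ) (ρ : ℝ), Osculates A nA x a ρ → ρ = Metric.infDist x A := by
    intro a ρ hosc
    obtain ⟨hball, haA, hdist, -⟩ := id hosc
    refine le_antisymm ?_ (hdist ▸ Metric.infDist_le_dist_of_mem haA)
    by_contra h
    push_neg at h
    obtain ⟨y, hy, hylt⟩ := (Metric.infDist_lt_iff hA).1 h
    exact absurd (hle a ρ ⟨hball, haA, hdist, hosc.2.2.2⟩ y hy) (not_le.2 hylt)
  refine ⟨fun a a' ρ ρ' h h' => (key a ρ h).trans (key a' ρ' h').symm,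
    fun a ρ h => ⟨key a ρ h, fun b hb => h.2.2.1 ▸ hle a ρ h b hb⟩, ?_⟩
  rintro o rA θ₁ θ₂ hrA hθ hAeq hnA a ρ hosc
  have hosc' := hosc
  obtain ⟨hball, haA, hdist, c, hc, hx⟩ := hosc
  -- every point of `A` is at distance `rA` from `o`
  have hnorm : ∀ p ∈ A, ‖p - o‖ = rA := by
    intro p hp
    rw [hAeq] at hp
    obtain ⟨θ, -, rfl⟩ := hp
    have h0 : o + (rA : ℂ) * Complex.exp (θ * Complex.I) - o
        = (rA : ℂ) * Complex.exp (θ * Complex.I) := by ring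
    rw [h0, norm_mul]
    simp [Complex.norm_exp_ofReal_mul_I, abs_of_pos hrA]
  have ha : ‖a - o‖ = rA := hnorm a haA
  have hao : ‖o - a‖ = rA := by rw [← norm_neg, neg_sub]; exact ha
  have hna : nA a = rA⁻¹ • (o - a) := hnA a haA
  -- the radius is `c`
  have hxa : x - a = (c * rA⁻¹) • (o - a) := by
    rw [hx, hna, smul_smul]; module
  have hρc : ρ = c := by
    rw [← hdist, dist_eq_norm, hxa, norm_smul, hao, Real.norm_eq_abs,
      abs_of_nonneg (mul_nonneg hc (inv_nonneg.2 hrA.le))]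
    field_simp
  subst hρc
  by_contra hlt
  push_neg at hlt
  -- `x - o` is a positive multiple of `o - a`
  set t : ℝ := (ρ - rA) / rA with ht
  have htpos : 0 < t := div_pos (by linarith) hrA
  have hco : ρ * rA⁻¹ = t + 1 := by rw [ht]; field_simp; ring
  have hxo : x - o = t • (o - a) := by
    rw [hx, hna, smul_smul, hco]; module
  have hxonorm : ‖x - o‖ = ρ - rA := by
    rw [hxo, norm_smul, Real.norm_eq_abs, abs_of_pos htpos, hao, ht]
    field_simp
  -- produce a point of `A` distinct from `a`
  have hπ := Real.pi_pos
  have hexists : ∃ p ∈ A, p ≠ a := by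
    set θ' : ℝ := min θ₂ (θ₁ + Real.pi) with hθ'
    have hθ'le : θ' ≤ θ₂ := min_le_left _ _
    have hθ'gt : θ₁ < θ' := lt_min hθ (by linarith)
    have hθ'lt : θ' - θ₁ ≤ Real.pi := by
      have := min_le_right θ₂ (θ₁ + Real.pi); linarith
    have hne : Complex.exp (θ₁ * Complex.I) ≠ Complex.exp (θ' * Complex.I) := by
      intro h
      rw [Complex.exp_eq_exp_iff_exists_int] at h
      obtain ⟨n, hn⟩ := h
      have h2 : ((θ₁ : ℝ) : ℂ) = ((θ' + n * (2 * Real.pi) : ℝ) : ℂ) := by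
        apply mul_right_cancel₀ Complex.I_ne_zero
        rw [hn]; push_cast; ring
      have h3 : (θ₁ : ℝ) = θ' + n * (2 * Real.pi) := by exact_mod_cast h2
      rcases le_or_gt 0 n with hn0 | hn0
      · have h4 : (0 : ℝ) ≤ (n : ℝ) := by exact_mod_cast hn0
        nlinarith
      · have h4' : n ≤ -1 := by omega
        have h4 : (n : ℝ) ≤ -1 := by exact_mod_cast h4'
        nlinarith
    set p₁ : ℂ := o + (rA : ℂ) * Complex.exp (θ₁ * Complex.I) with hp₁
    set p₂ : ℂ := o + (rA : ℂ) * Complex.exp (θ' * Complex.I) with hp₂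
    have hp₁A : p₁ ∈ A := by rw [hAeq]; exact ⟨θ₁, ⟨le_refl _, hθ.le⟩, rfl⟩
    have hp₂A : p₂ ∈ A := by rw [hAeq]; exact ⟨θ', ⟨hθ'gt.le, hθ'le⟩, rfl⟩
    have hp12 : p₁ ≠ p₂ := by
      simp only [hp₁, hp₂]
      intro h
      exact hne (mul_left_cancel₀ (by exact_mod_cast hrA.ne') (add_left_cancel h))
    rcases eq_or_ne p₁ a with h1 | h1
    · exact ⟨p₂, hp₂A, fun h2 => hp12 (h1.trans h2.symm)⟩
    · exact ⟨p₁, hp₁A, h1⟩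
  obtain ⟨p, hpA, hpa⟩ := hexists
  -- triangle inequality forces equality
  have hge : ρ ≤ dist x p := hle a ρ hosc' p hpA
  have htri : dist x p ≤ dist x o + dist o p := dist_triangle x o p
  have hop : dist o p = rA := by rw [dist_eq_norm, ← norm_neg, neg_sub]; exact hnorm p hpA
  have hxod : dist x o = ρ - rA := by rw [dist_eq_norm]; exact hxonorm
  have heq : dist x p = dist x o + dist o p := by
    rw [hop, hxod]; rw [hop, hxod] at htri; linarith
  -- equality in the triangle inequality in a strictly convex space ⇒ same ray
  have hsr : SameRay ℝ (x - o) (o - p) := by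
    rw [sameRay_iff_norm_add]
    have h5 : x - o + (o - p) = x - p := by abel
    rw [h5, ← dist_eq_norm, ← dist_eq_norm, ← dist_eq_norm, heq]
  rw [hxo] at hsr
  have hoa : (o - a) ≠ 0 := by
    intro h
    rw [h, norm_zero] at hao
    exact hrA.ne hao
  have hne0 : t • (o - a) ≠ 0 := smul_ne_zero htpos.ne' hoa
  have hsr0 : SameRay ℝ (o - a) (t • (o - a)) :=
    SameRay.sameRay_nonneg_smul_right (o - a) htpos.le
  have hsr' : SameRay ℝ (o - a) (o - p) := hsr0.trans hsr (fun h => (hne0 h).elim)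
  have hsmul := hsr'.norm_smul_eq
  have hpo : ‖o - p‖ = rA := by rw [← norm_neg, neg_sub]; exact hnorm p hpA
  rw [hao, hpo] at hsmul
  have hfinal : o - p = o - a := smul_right_injective ℂ hrA.ne' hsmul
  exact hpa (by linear_combination -hfinal)
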